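/- arXiv:1307.2584 — 4 statements merged into one kernel-verified Lean document; each statement's English description precedes it below -/
import Mathlib

section
/- If ρ = |h|² where h is a circularly symmetric complex Gaussian with variance r > 0 (so ρ is exponentially distributed with mean r), and a, b > 0 are reals, then E[ρ/(aρ + b)] = (1/a)·(1 − (b/(a r)) · E₁(b/(a r)) · e^{b/(a r)}), where E₁(x) = ∫₁^∞ e^{−t x}/t dt is the exponential integral. -/
open MeasureTheory

/-- Exponential integral `E₁(x) = ∫₁^∞ e^{−tx}/t dt`. -/
noncomputable def expInt (x : ℝ) : ℝ := ∫ t in Set.Ioi (1 : ℝ), Real.exp (-(t * x)) / t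

lemma shift_Ioi (c : ℝ) (f : ℝ → ℝ) : ∫ x in Set.Ioi (0:ℝ), f (x + c) = ∫ x in Set.Ioi c, f x := by
  have h := (measurePreserving_add_right (volume : Measure ℝ) c)
  have he : MeasurableEmbedding (fun x : ℝ => x + c) :=
    (Homeomorph.addRight c).measurableEmbedding
  have := h.setIntegral_preimage_emb he f (Set.Ioi c)
  simpa [Set.preimage_add_const_Ioi] using this

/-- If `ρ` is exponentially distributed with mean `r > 0` and `a, b > 0`, then
`E[ρ/(aρ+b)] = (1/a)(1 − (b/(ar)) E₁(b/(ar)) e^{b/(ar)})`. -/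
theorem stmt1 (r a b : ℝ) (hr : 0 < r) (ha : 0 < a) (hb : 0 < b) :
    ∫ ρ in Set.Ioi (0 : ℝ), (ρ / (a * ρ + b)) * ((1 / r) * Real.exp (-ρ / r))
      = (1 / a) * (1 - (b / (a * r)) * expInt (b / (a * r)) * Real.exp (b / (a * r))) := by
  have hc : 0 < b / (a * r) := div_pos hb (mul_pos ha hr)
  set c := b / (a * r) with hcdef
  set J := ∫ ρ in Set.Ioi (0:ℝ), (b / (a * ρ + b)) * Real.exp (-ρ / r) with hJ
  clear_value c J
  -- key positivity on Ioi 0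
  have hpos : ∀ ρ ∈ Set.Ioi (0:ℝ), 0 < a * ρ + b := fun ρ hρ =>
    add_pos (mul_pos ha hρ) hb
  -- step 1: substitution result: expInt c = (a/b) * exp(-c) * J
  have hsub : expInt c = (a / b) * Real.exp (-c) * J := by
    have h1 : expInt c = ∫ s in Set.Ioi (0:ℝ), Real.exp (-((s + 1) * c)) / (s + 1) := by
      rw [expInt, ← shift_Ioi 1 (fun t => Real.exp (-(t * c)) / t)]
    have h2 : (∫ ρ in Set.Ioi (0:ℝ),
          Real.exp (-(((a / b) * ρ + 1) * c)) / ((a / b) * ρ + 1))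
        = (a / b)⁻¹ • ∫ s in Set.Ioi ((a/b) * 0), Real.exp (-((s + 1) * c)) / (s + 1) := by
      exact MeasureTheory.integral_comp_mul_left_Ioi
        (fun s => Real.exp (-((s + 1) * c)) / (s + 1)) 0 (div_pos ha hb)
    rw [mul_zero] at h2
    have h3 : ∀ ρ ∈ Set.Ioi (0:ℝ),
        Real.exp (-(((a / b) * ρ + 1) * c)) / ((a / b) * ρ + 1)
          = Real.exp (-c) * ((b / (a * ρ + b)) * Real.exp (-ρ / r)) := by
      intro ρ hρ
      have hρ0 : (0:ℝ) < ρ := hρ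
      have habρ : 0 < a * ρ + b := hpos ρ hρ
      have e1 : ((a / b) * ρ + 1) * c = ρ / r + c := by
        field_simp [hcdef]
        have h := div_mul_cancel₀ b (mul_pos ha hr).ne'; rw [← hcdef] at h; linear_combination ρ * h
      have e2 : (a / b) * ρ + 1 = (a * ρ + b) / b := by field_simp
      rw [e1, e2, div_div_eq_mul_div]
      rw [show -(ρ / r + c) = -(ρ/r) + -c by ring, Real.exp_add, neg_div]
      ring
    have h4 : (∫ ρ in Set.Ioi (0:ℝ),
          Real.exp (-(((a / b) * ρ + 1) * c)) / ((a / b) * ρ + 1))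
        = Real.exp (-c) * J := by
      rw [hJ, ← integral_const_mul]
      exact setIntegral_congr_fun measurableSet_Ioi h3
    rw [h4, smul_eq_mul] at h2
    rw [h1, mul_assoc, h2, mul_inv_cancel_left₀ (div_pos ha hb).ne']
  -- integrability
  have hInt1 : IntegrableOn (fun ρ : ℝ => Real.exp (-ρ / r)) (Set.Ioi 0) := by
    have h := exp_neg_integrableOn_Ioi 0 (inv_pos.mpr hr)
    refine h.congr_fun (fun x _ => ?_) measurableSet_Ioi
    rw [neg_div, div_eq_inv_mul]; simp only [neg_mul]
  have hmeas2 : AEStronglyMeasurable (fun ρ : ℝ => (b / (a * ρ + b)) * Real.exp (-ρ / r))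
      (volume.restrict (Set.Ioi 0)) := by
    exact ((measurable_const.div ((measurable_id.const_mul a).add_const b)).mul
      (Real.measurable_exp.comp (measurable_id.neg.div_const r))).aestronglyMeasurable
  have hInt2 : IntegrableOn (fun ρ : ℝ => (b / (a * ρ + b)) * Real.exp (-ρ / r))
      (Set.Ioi 0) := by
    refine Integrable.mono hInt1 hmeas2 ?_
    rw [ae_restrict_iff' measurableSet_Ioi]
    refine MeasureTheory.ae_of_all _ (fun x hx => ?_)
    have hx0 : (0:ℝ) < x := hx
    have habx : 0 < a * x + b := add_pos (mul_pos ha hx0) hb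
    have h1 : b / (a * x + b) ≤ 1 := by
      rw [div_le_one habx]; nlinarith
    have h2 : 0 ≤ b / (a * x + b) := le_of_lt (div_pos hb habx)
    have hn : ‖b / (a * x + b) * Real.exp (-x / r)‖
        = b / (a * x + b) * Real.exp (-x / r) := by
      rw [Real.norm_eq_abs, abs_of_nonneg (by positivity)]
    rw [hn, Real.norm_eq_abs, abs_of_pos (Real.exp_pos _)]
    exact mul_le_of_le_one_left (Real.exp_pos _).le h1
  -- value of ∫ exp(-ρ/r)
  have hExp : (∫ ρ in Set.Ioi (0:ℝ), Real.exp (-ρ / r)) = r := by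
    have h := MeasureTheory.integral_comp_mul_left_Ioi (fun x => Real.exp (-x)) 0
      (inv_pos.mpr hr)
    simp only [mul_zero, integral_exp_neg_Ioi_zero, smul_eq_mul, mul_one, inv_inv] at h
    have heq : (∫ ρ in Set.Ioi (0:ℝ), Real.exp (-ρ / r))
        = ∫ x in Set.Ioi (0:ℝ), Real.exp (-(r⁻¹ * x)) :=
      setIntegral_congr_fun measurableSet_Ioi (fun x _ => by
        rw [neg_div, div_eq_inv_mul])
    rw [heq, h]
  -- split the integral
  have hsplit : (∫ ρ in Set.Ioi (0 : ℝ), (ρ / (a * ρ + b)) * ((1 / r) * Real.exp (-ρ / r)))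
      = (∫ ρ in Set.Ioi (0:ℝ), (1/(a*r)) * Real.exp (-ρ / r))
        - ∫ ρ in Set.Ioi (0:ℝ), (1/(a*r)) * ((b / (a * ρ + b)) * Real.exp (-ρ / r)) := by
    rw [← integral_sub (hInt1.const_mul _) (hInt2.const_mul _)]
    refine setIntegral_congr_fun measurableSet_Ioi (fun x hx => ?_)
    have hx0 : (0:ℝ) < x := hx
    have habx : (a * x + b) ≠ 0 := (add_pos (mul_pos ha hx0) hb).ne'
    field_simp
    ring
  rw [hsplit, integral_const_mul, integral_const_mul, hExp, hsub, ← hJ, Real.exp_neg]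
  have key : c * (a / b * (Real.exp c)⁻¹ * J) * Real.exp c = J / r := by
    rw [hcdef]
    field_simp
  rw [key]
  field_simp
end

section
/- (Estimation error floor) With R = λI and S = 0, the per-element LMMSE estimation error variance converges as p → ∞ to the strictly positive floor λ·(1 − 1/(1 + κ_t + κ_r)), whenever κ_t + κ_r > 0. In particular, perfect estimation accuracy is impossible for any finite or infinite pilot power under hardware impairments. -/
/-- Estimation error floor: as the pilot power `p → ∞`, the per-element error variance
`c(p) = λ(1 − pλ/(pλ(1+κ_t+κ_r)+σ²))` converges to the strictly positive floor
`λ(1 − 1/(1+κ_t+κ_r))` whenever `κ_t + κ_r > 0`. -/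
theorem stmt7 (lam σ2 κt κr : ℝ) (hlam : 0 < lam) (hσ : 0 < σ2)
    (hκt : 0 ≤ κt) (hκr : 0 ≤ κr) (hpos : 0 < κt + κr) :
    Filter.Tendsto (fun p : ℝ => lam * (1 - p * lam / (p * lam * (1 + κt + κr) + σ2)))
        Filter.atTop (nhds (lam * (1 - 1 / (1 + κt + κr))))
      ∧ 0 < lam * (1 - 1 / (1 + κt + κr)) := by
  have hK : (0:ℝ) < 1 + κt + κr := by linarith
  constructor
  · have h0 : Filter.Tendsto (fun p : ℝ => lam / (lam * (1 + κt + κr) + σ2 / p))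
        Filter.atTop (nhds (1 / (1 + κt + κr))) := by
      have hden : Filter.Tendsto (fun p : ℝ => lam * (1 + κt + κr) + σ2 / p)
          Filter.atTop (nhds (lam * (1 + κt + κr))) := by
        have h2 : Filter.Tendsto (fun p : ℝ => σ2 / p) Filter.atTop (nhds 0) :=
          Filter.Tendsto.div_atTop tendsto_const_nhds Filter.tendsto_id
        simpa using (tendsto_const_nhds (x := lam * (1 + κt + κr))
          (f := Filter.atTop (α := ℝ))).add h2
      have := Filter.Tendsto.div (tendsto_const_nhds (x := lam)) hden
        (by positivity)
      convert this using 2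
      · rfl
      field_simp
    have heq : ∀ᶠ p : ℝ in Filter.atTop,
        lam * (1 - p * lam / (p * lam * (1 + κt + κr) + σ2)) =
        lam * (1 - lam / (lam * (1 + κt + κr) + σ2 / p)) := by
      filter_upwards [Filter.eventually_gt_atTop 0] with p hp
      have hp' : p ≠ 0 := ne_of_gt hp
      have hdpos : 0 < p * lam * (1 + κt + κr) + σ2 := by positivity
      have hd2 : (lam * (1 + κt + κr) + σ2 / p) ≠ 0 := by positivity
      field_simp
    refine Filter.Tendsto.congr' (heq.mono fun p h => h.symm) ?_
    exact (tendsto_const_nhds.sub h0).const_mul lam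
  · have h1 : 1 / (1 + κt + κr) < 1 := by
      rw [div_lt_one hK]; linarith
    have : 0 < 1 - 1 / (1 + κt + κr) := by linarith
    positivity
end

section
/- (High-power capacity ceiling) The function q ↦ log₂(1 + G(q)/(1 + κ_r G(q))), where G(q) = ∑_{i=1}^N (1/κ_t)(1 − (σ²/(q κ_t rᵢᵢ)) e^{σ²/(q κ_t rᵢᵢ)} E₁(σ²/(q κ_t rᵢᵢ))), converges as q → ∞ to log₂(1 + N/(κ_t + κ_r N)), for κ_t, κ_r > 0 and rᵢᵢ > 0 for all i. -/
open MeasureTheory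

open Set Real Filter in
lemma expInt_nonneg {x : ℝ} (hx : 0 < x) : 0 ≤ expInt x := by
  apply setIntegral_nonneg measurableSet_Ioi
  intro t ht
  have : (1:ℝ) < t := ht
  positivity

open Set Real Filter in
lemma expInt_le {x : ℝ} (hx : 0 < x) :
    expInt x ≤ Real.Gamma (1/2) / Real.sqrt x := by
  have hg_int : IntegrableOn (fun t : ℝ => t ^ (-(1/2) : ℝ) * Real.exp (-(x*t))) (Ioi 0) := by
    have := integrableOn_rpow_mul_exp_neg_mul_rpow (s := -(1/2)) (p := 1) (b := x)
      (by norm_num) (by norm_num) hx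
    simpa [Real.rpow_one, neg_mul] using this
  have hbound : ∀ t : ℝ, 1 ≤ t → Real.exp (-(t*x)) / t ≤ t ^ (-(1/2):ℝ) * Real.exp (-(x*t)) := by
    intro t ht
    have ht0 : (0:ℝ) < t := by linarith
    have h1 : (1:ℝ)/t ≤ t ^ (-(1/2):ℝ) := by
      rw [Real.rpow_neg ht0.le, one_div]
      have h2 : t ^ ((1:ℝ)/2) ≤ t := by
        calc t ^ ((1:ℝ)/2) ≤ t ^ (1:ℝ) := Real.rpow_le_rpow_of_exponent_le ht (by norm_num)
        _ = t := Real.rpow_one t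
      have h3 : (0:ℝ) < t ^ ((1:ℝ)/2) := Real.rpow_pos_of_pos ht0 _
      gcongr
    calc Real.exp (-(t*x)) / t = Real.exp (-(x*t)) * (1/t) := by
          rw [mul_comm t x]; ring
      _ ≤ Real.exp (-(x*t)) * t ^ (-(1/2):ℝ) := by
          gcongr
      _ = t ^ (-(1/2):ℝ) * Real.exp (-(x*t)) := by ring
  have hf_int : IntegrableOn (fun t : ℝ => Real.exp (-(t*x)) / t) (Ioi 1) := by
    apply Integrable.mono' (hg_int.mono_set (Ioi_subset_Ioi zero_le_one))
    · apply Measurable.aestronglyMeasurable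
      measurability
    · filter_upwards [ae_restrict_mem measurableSet_Ioi] with t ht
      have ht1 : (1:ℝ) < t := ht
      have ht0 : (0:ℝ) < t := by linarith
      rw [Real.norm_eq_abs, abs_of_nonneg (by positivity)]
      exact hbound t ht1.le
  have h1 : expInt x ≤ ∫ t in Ioi (1:ℝ), t ^ (-(1/2):ℝ) * Real.exp (-(x*t)) := by
    apply setIntegral_mono_on hf_int (hg_int.mono_set (Ioi_subset_Ioi zero_le_one))
      measurableSet_Ioi
    intro t ht
    exact hbound t (le_of_lt ht)
  have h2 : (∫ t in Ioi (1:ℝ), t ^ (-(1/2):ℝ) * Real.exp (-(x*t)))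
      ≤ ∫ t in Ioi (0:ℝ), t ^ (-(1/2):ℝ) * Real.exp (-(x*t)) := by
    apply setIntegral_mono_set hg_int
    · filter_upwards [ae_restrict_mem measurableSet_Ioi] with t ht
      have ht0 : (0:ℝ) < t := ht
      positivity
    · exact HasSubset.Subset.eventuallyLE (Ioi_subset_Ioi zero_le_one)
  have h3 : (∫ t in Ioi (0:ℝ), t ^ (-(1/2):ℝ) * Real.exp (-(x*t)))
      = (1/x) ^ ((1:ℝ)/2) * Real.Gamma (1/2) := by
    have := Real.integral_rpow_mul_exp_neg_mul_Ioi (a := 1/2) (r := x) (by norm_num) hx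
    rw [← this]
    norm_num
  have h4 : (1/x : ℝ) ^ ((1:ℝ)/2) * Real.Gamma (1/2) = Real.Gamma (1/2) / Real.sqrt x := by
    rw [Real.sqrt_eq_rpow, Real.div_rpow zero_le_one hx.le, Real.one_rpow]
    field_simp
  have h5 := h1.trans h2
  rw [h3, h4] at h5
  exact h5

open Set Real Filter in
lemma tendsto_xexE :
    Filter.Tendsto (fun x : ℝ => x * Real.exp x * expInt x)
      (nhdsWithin 0 (Set.Ioi 0)) (nhds 0) := by
  apply squeeze_zero' (g := fun x : ℝ => Real.sqrt x * Real.exp x * Real.Gamma (1/2))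
  · filter_upwards [self_mem_nhdsWithin] with x hx
    have hx0 : (0:ℝ) < x := hx
    exact mul_nonneg (by positivity) (expInt_nonneg hx0)
  · filter_upwards [self_mem_nhdsWithin] with x hx
    have hx0 : (0:ℝ) < x := hx
    have h1 : expInt x ≤ Real.Gamma (1/2) / Real.sqrt x := expInt_le hx0
    have hs : (0:ℝ) < Real.sqrt x := Real.sqrt_pos.mpr hx0
    calc x * Real.exp x * expInt x ≤ x * Real.exp x * (Real.Gamma (1/2) / Real.sqrt x) := by
          gcongr
      _ = Real.sqrt x * Real.exp x * Real.Gamma (1/2) := by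
          rw [eq_comm]
          field_simp
          linear_combination Real.mul_self_sqrt hx0.le
  · have : Filter.Tendsto (fun x : ℝ => Real.sqrt x * Real.exp x * Real.Gamma (1/2))
        (nhds 0) (nhds (Real.sqrt 0 * Real.exp 0 * Real.Gamma (1/2))) := by
      exact ((Real.continuous_sqrt.mul Real.continuous_exp).mul continuous_const).tendsto 0
    simpa using this.mono_left nhdsWithin_le_nhds

/-- High-power capacity ceiling: with
`G(q) = ∑ᵢ (1/κ_t)(1 − (σ²/(q κ_t rᵢᵢ)) e^{σ²/(q κ_t rᵢᵢ)} E₁(σ²/(q κ_t rᵢᵢ)))`,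
the quantity `log₂(1 + G(q)/(1 + κ_r G(q)))` converges, as the power `q → ∞`, to
`log₂(1 + N/(κ_t + κ_r N))`. -/
theorem stmt11 (N : ℕ) (σ2 κt κr : ℝ) (r : Fin N → ℝ)
    (hσ : 0 < σ2) (hκt : 0 < κt) (hκr : 0 < κr) (hr : ∀ i, 0 < r i) :
    Filter.Tendsto
      (fun q : ℝ =>
        Real.logb 2 (1 +
          (∑ i, (1 / κt) * (1 - (σ2 / (q * κt * r i)) * Real.exp (σ2 / (q * κt * r i))
              * expInt (σ2 / (q * κt * r i)))) /
          (1 + κr * ∑ i, (1 / κt) * (1 - (σ2 / (q * κt * r i)) * Real.exp (σ2 / (q * κt * r i))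
              * expInt (σ2 / (q * κt * r i))))))
      Filter.atTop
      (nhds (Real.logb 2 (1 + (N : ℝ) / (κt + κr * N)))) := by
  set L : ℝ := (N : ℝ) / κt with hL
  -- each inner variable tends to 0 within Ioi 0
  have hx : ∀ i : Fin N, Filter.Tendsto (fun q : ℝ => σ2 / (q * κt * r i)) Filter.atTop
      (nhdsWithin 0 (Set.Ioi 0)) := by
    intro i
    rw [tendsto_nhdsWithin_iff]
    constructor
    · apply Filter.Tendsto.div_atTop (tendsto_const_nhds)
      exact (Filter.tendsto_id.atTop_mul_const hκt).atTop_mul_const (hr i)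
    · filter_upwards [Filter.eventually_gt_atTop (0:ℝ)] with q hq
      have hq' : 0 < q * κt * r i := mul_pos (mul_pos hq hκt) (hr i)
      exact Set.mem_Ioi.mpr (div_pos hσ hq')
  -- the sum tends to N/κt
  have hS : Filter.Tendsto (fun q : ℝ => ∑ i, (1 / κt) *
      (1 - (σ2 / (q * κt * r i)) * Real.exp (σ2 / (q * κt * r i))
        * expInt (σ2 / (q * κt * r i)))) Filter.atTop (nhds L) := by
    have hterm : ∀ i : Fin N, Filter.Tendsto (fun q : ℝ => (1 / κt) *
        (1 - (σ2 / (q * κt * r i)) * Real.exp (σ2 / (q * κt * r i))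
          * expInt (σ2 / (q * κt * r i)))) Filter.atTop (nhds (1/κt)) := by
      intro i
      have h0 : Filter.Tendsto (fun q : ℝ =>
          (σ2 / (q * κt * r i)) * Real.exp (σ2 / (q * κt * r i))
            * expInt (σ2 / (q * κt * r i))) Filter.atTop (nhds 0) :=
        tendsto_xexE.comp (hx i)
      have h1 := ((tendsto_const_nhds (x := (1:ℝ))).sub h0).const_mul (1/κt)
      simpa using h1
    have := tendsto_finset_sum Finset.univ (fun i _ => hterm i)
    simpa [Finset.sum_const, Finset.card_univ, hL, div_eq_mul_inv, mul_comm] using this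
  have hLpos : 0 ≤ L := by positivity
  have hden : (0:ℝ) < 1 + κr * L := by positivity
  have h1 : Filter.Tendsto (fun q : ℝ => 1 + κr * ∑ i, (1 / κt) *
      (1 - (σ2 / (q * κt * r i)) * Real.exp (σ2 / (q * κt * r i))
        * expInt (σ2 / (q * κt * r i)))) Filter.atTop (nhds (1 + κr * L)) :=
    (hS.const_mul κr).const_add 1
  have hdiv := hS.div h1 hden.ne'
  have hadd := hdiv.const_add (1:ℝ)
  have hargpos : (0:ℝ) < 1 + L / (1 + κr * L) := by positivity
  have hcont : ContinuousAt (Real.logb 2) (1 + L / (1 + κr * L)) :=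
    Real.continuousAt_logb hargpos.ne'
  have hfinal := hcont.tendsto.comp hadd
  have heq : 1 + L / (1 + κr * L) = 1 + (N : ℝ) / (κt + κr * N) := by
    have h2 : (0:ℝ) < κt + κr * N := by positivity
    rw [hL]
    field_simp
  rw [heq] at hfinal
  exact hfinal
end

section
/- The map x ↦ x e^x E₁(x) on (0,∞), where E₁(x)=∫₁^∞ e^{−tx}/t dt, satisfies 0 < x e^x E₁(x) < 1 for all x > 0, tends to 0 as x → 0⁺, and tends to 1 as x → ∞. -/
open MeasureTheory

section aux

open Set Filter

private lemma tendsto_tx (x : ℝ) (hx : 0 < x) :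
    Tendsto (fun t : ℝ => t * x) atTop atTop :=
  Tendsto.atTop_mul_const hx tendsto_id

private lemma exp_tendsto (x : ℝ) (hx : 0 < x) :
    Tendsto (fun t : ℝ => Real.exp (-(t * x))) atTop (nhds 0) :=
  Real.tendsto_exp_neg_atTop_nhds_zero.comp (tendsto_tx x hx)

private lemma derivA (x : ℝ) (hx : 0 < x) (t : ℝ) :
    HasDerivAt (fun t : ℝ => -(Real.exp (-(t * x))) / x) (Real.exp (-(t * x))) t := by
  have h1 : HasDerivAt (fun t : ℝ => -(t * x)) (-x) t := by
    simpa using ((hasDerivAt_id t).mul_const x).fun_neg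
  have h2 := (Real.hasDerivAt_exp (-(t * x))).comp t h1
  have h3 := h2.fun_neg.div_const x
  refine h3.congr_deriv ?_
  field_simp

private lemma intA (x : ℝ) (hx : 0 < x) :
    ∫ t in Ioi (1 : ℝ), Real.exp (-(t * x)) = Real.exp (-x) / x := by
  have hT : Tendsto (fun t : ℝ => -(Real.exp (-(t * x))) / x) atTop (nhds 0) := by
    have := ((exp_tendsto x hx).neg).div_const x
    simpa using this
  have := integral_Ioi_of_hasDerivAt_of_nonneg' (a := 1)
    (fun t _ => derivA x hx t) (fun t _ => (Real.exp_pos _).le) hT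
  rw [this]
  field_simp
  ring

private lemma intA_integrable (x : ℝ) (hx : 0 < x) :
    IntegrableOn (fun t : ℝ => Real.exp (-(t * x))) (Ioi (1 : ℝ)) := by
  have hT : Tendsto (fun t : ℝ => -(Real.exp (-(t * x))) / x) atTop (nhds 0) := by
    have := ((exp_tendsto x hx).neg).div_const x
    simpa using this
  exact integrableOn_Ioi_deriv_of_nonneg' (fun t _ => derivA x hx t)
    (fun t _ => (Real.exp_pos _).le) hT

private lemma derivB (x : ℝ) (hx : 0 < x) (t : ℝ) :
    HasDerivAt (fun t : ℝ => (-(t - 1) / x - 1 / x ^ 2) * Real.exp (-(t * x)))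
      ((t - 1) * Real.exp (-(t * x))) t := by
  have h1 : HasDerivAt (fun t : ℝ => -(t - 1) / x - 1 / x ^ 2) (-1 / x) t :=
    ((((hasDerivAt_id t).sub_const 1).neg).div_const x).sub_const (1 / x ^ 2)
  have h2 : HasDerivAt (fun t : ℝ => Real.exp (-(t * x))) (Real.exp (-(t * x)) * (-x)) t := by
    have ha : HasDerivAt (fun t : ℝ => -(t * x)) (-x) t := by
      simpa using ((hasDerivAt_id t).mul_const x).fun_neg
    exact (Real.hasDerivAt_exp (-(t * x))).comp t ha
  have h3 := h1.fun_mul h2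
  refine h3.congr_deriv ?_
  field_simp
  ring

private lemma tendstoB (x : ℝ) (hx : 0 < x) :
    Tendsto (fun t : ℝ => (-(t - 1) / x - 1 / x ^ 2) * Real.exp (-(t * x))) atTop (nhds 0) := by
  have l1 : Tendsto (fun t : ℝ => (t * x) * Real.exp (-(t * x))) atTop (nhds 0) := by
    have := (Real.tendsto_pow_mul_exp_neg_atTop_nhds_zero 1).comp (tendsto_tx x hx)
    simpa [Function.comp_def] using this
  have l2 := exp_tendsto x hx
  have key : Tendsto (fun t : ℝ =>
      (-(1 / x ^ 2)) * ((t * x) * Real.exp (-(t * x)))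
        + (1 / x - 1 / x ^ 2) * Real.exp (-(t * x))) atTop (nhds 0) := by
    have := (l1.const_mul (-(1 / x ^ 2))).add (l2.const_mul (1 / x - 1 / x ^ 2))
    simpa using this
  refine key.congr (fun t => ?_)
  field_simp
  ring

private lemma intB (x : ℝ) (hx : 0 < x) :
    ∫ t in Ioi (1 : ℝ), (t - 1) * Real.exp (-(t * x)) = Real.exp (-x) / x ^ 2 := by
  have := integral_Ioi_of_hasDerivAt_of_nonneg' (a := 1)
    (fun t _ => derivB x hx t)
    (fun t ht => mul_nonneg (by linarith [mem_Ioi.mp ht]) (Real.exp_pos _).le)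
    (tendstoB x hx)
  rw [this]
  field_simp
  ring

private lemma intB_integrable (x : ℝ) (hx : 0 < x) :
    IntegrableOn (fun t : ℝ => (t - 1) * Real.exp (-(t * x))) (Ioi (1 : ℝ)) :=
  integrableOn_Ioi_deriv_of_nonneg' (fun t _ => derivB x hx t)
    (fun t ht => mul_nonneg (by linarith [mem_Ioi.mp ht]) (Real.exp_pos _).le)
    (tendstoB x hx)

private lemma expInt_integrable (x : ℝ) (hx : 0 < x) :
    IntegrableOn (fun t : ℝ => Real.exp (-(t * x)) / t) (Ioi (1 : ℝ)) := by
  refine (intA_integrable x hx).mono' ?_ ?_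
  · apply ContinuousOn.aestronglyMeasurable _ measurableSet_Ioi
    apply ContinuousOn.div
    · exact (Real.continuous_exp.comp ((continuous_id.mul continuous_const).neg)).continuousOn
    · exact continuousOn_id
    · intro t ht
      exact ne_of_gt (lt_trans one_pos (mem_Ioi.mp ht))
  · filter_upwards [ae_restrict_mem measurableSet_Ioi] with t ht
    have ht1 : (1 : ℝ) < t := mem_Ioi.mp ht
    rw [Real.norm_eq_abs, abs_of_nonneg (div_nonneg (Real.exp_pos _).le (by linarith))]
    rw [div_le_iff₀ (by linarith)]
    nlinarith [Real.exp_pos (-(t * x))]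

private lemma expInt_pos (x : ℝ) (hx : 0 < x) : 0 < expInt x := by
  rw [expInt]
  rw [setIntegral_pos_iff_support_of_nonneg_ae ?_ (expInt_integrable x hx)]
  · have hsub : Ioi (1 : ℝ) ⊆ Function.support (fun t : ℝ => Real.exp (-(t * x)) / t) := by
      intro t ht
      have ht1 : (1 : ℝ) < t := mem_Ioi.mp ht
      exact ne_of_gt (div_pos (Real.exp_pos _) (by linarith))
    rw [Set.inter_eq_right.mpr hsub]
    simp
  · filter_upwards [ae_restrict_mem measurableSet_Ioi] with t ht
    exact div_nonneg (Real.exp_pos _).le (by linarith [mem_Ioi.mp ht])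

private lemma expInt_lt (x : ℝ) (hx : 0 < x) : expInt x < Real.exp (-x) / x := by
  have hSub : IntegrableOn (fun t : ℝ => Real.exp (-(t * x)) - Real.exp (-(t * x)) / t)
      (Ioi (1 : ℝ)) := (intA_integrable x hx).sub (expInt_integrable x hx)
  have hdiff : 0 < ∫ t in Ioi (1 : ℝ), (Real.exp (-(t * x)) - Real.exp (-(t * x)) / t) := by
    rw [setIntegral_pos_iff_support_of_nonneg_ae ?_ hSub]
    · have hsub : Ioi (1 : ℝ) ⊆ Function.support
          (fun t : ℝ => Real.exp (-(t * x)) - Real.exp (-(t * x)) / t) := by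
        intro t ht
        have ht1 : (1 : ℝ) < t := mem_Ioi.mp ht
        have : Real.exp (-(t * x)) / t < Real.exp (-(t * x)) := by
          rw [div_lt_iff₀ (by linarith)]
          nlinarith [Real.exp_pos (-(t * x))]
        exact ne_of_gt (by linarith)
      rw [Set.inter_eq_right.mpr hsub]
      simp
    · filter_upwards [ae_restrict_mem measurableSet_Ioi] with t ht
      have ht1 : (1 : ℝ) < t := mem_Ioi.mp ht
      have : Real.exp (-(t * x)) / t ≤ Real.exp (-(t * x)) := by
        rw [div_le_iff₀ (by linarith)]
        nlinarith [Real.exp_pos (-(t * x))]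
      simp only [Pi.zero_apply]
      linarith
  rw [integral_sub (intA_integrable x hx) (expInt_integrable x hx), intA x hx] at hdiff
  rw [expInt]
  linarith

private lemma expInt_ge (x : ℝ) (hx : 0 < x) :
    Real.exp (-x) / x - Real.exp (-x) / x ^ 2 ≤ expInt x := by
  have hSub : IntegrableOn (fun t : ℝ => Real.exp (-(t * x)) - (t - 1) * Real.exp (-(t * x)))
      (Ioi (1 : ℝ)) := (intA_integrable x hx).sub (intB_integrable x hx)
  have h1 : ∫ t in Ioi (1 : ℝ),
      (Real.exp (-(t * x)) - (t - 1) * Real.exp (-(t * x)))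
        ≤ ∫ t in Ioi (1 : ℝ), Real.exp (-(t * x)) / t := by
    refine setIntegral_mono_on hSub
      (expInt_integrable x hx) measurableSet_Ioi ?_
    intro t ht
    have ht1 : (1 : ℝ) < t := mem_Ioi.mp ht
    rw [le_div_iff₀ (by linarith)]
    nlinarith [Real.exp_pos (-(t * x)), sq_nonneg (t - 1)]
  rw [integral_sub (intA_integrable x hx) (intB_integrable x hx), intA x hx, intB x hx] at h1
  rw [expInt]
  linarith

private lemma sqrt_le_exp (u : ℝ) : Real.sqrt u ≤ Real.exp u := by
  rcases le_or_gt u 0 with h | h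
  · rw [Real.sqrt_eq_zero'.mpr h]
    exact (Real.exp_pos u).le
  · rcases le_or_gt u 1 with h1 | h1
    · have h2 : Real.sqrt u ≤ 1 := Real.sqrt_le_one.mpr h1
      have h3 : (1 : ℝ) ≤ Real.exp u := Real.one_le_exp h.le
      linarith
    · have h0 : (1 : ℝ) ≤ Real.sqrt u := by
        rw [show (1 : ℝ) = Real.sqrt 1 by simp]
        exact Real.sqrt_le_sqrt h1.le
      nlinarith [Real.sq_sqrt h.le, Real.add_one_le_exp u]

private lemma mul_expInt_le (x : ℝ) (hx : 0 < x) :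
    x * expInt x ≤ Real.sqrt x * 2 := by
  have hint : ∫ t in Ioi (1 : ℝ), (t : ℝ) ^ (-(3/2) : ℝ) = 2 := by
    rw [integral_Ioi_rpow_of_lt (by norm_num) one_pos]
    norm_num [Real.one_rpow]
  have hInt32 : IntegrableOn (fun t : ℝ => (t : ℝ) ^ (-(3/2) : ℝ)) (Ioi (1 : ℝ)) :=
    integrableOn_Ioi_rpow_of_lt (by norm_num) one_pos
  have key : ∫ t in Ioi (1 : ℝ), x * (Real.exp (-(t * x)) / t)
      ≤ ∫ t in Ioi (1 : ℝ), Real.sqrt x * (t : ℝ) ^ (-(3/2) : ℝ) := by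
    refine setIntegral_mono_on ((expInt_integrable x hx).const_mul x)
      (hInt32.const_mul _) measurableSet_Ioi ?_
    intro t ht
    have ht1 : (1 : ℝ) < t := mem_Ioi.mp ht
    have ht0 : (0 : ℝ) < t := by linarith
    have hst : (0 : ℝ) < Real.sqrt t := Real.sqrt_pos.mpr ht0
    have hsx : (0 : ℝ) < Real.sqrt x := Real.sqrt_pos.mpr hx
    have hrw : (t : ℝ) ^ (-(3/2) : ℝ) = 1 / (t * Real.sqrt t) := by
      rw [Real.rpow_neg ht0.le, show (3/2 : ℝ) = 1 + 1/2 by norm_num,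
        Real.rpow_add ht0, Real.rpow_one, ← Real.sqrt_eq_rpow, inv_eq_one_div]
    have hbound : Real.exp (-(t * x)) ≤ 1 / (Real.sqrt t * Real.sqrt x) := by
      have h1 : Real.sqrt t * Real.sqrt x ≤ Real.exp (t * x) := by
        rw [← Real.sqrt_mul ht0.le]
        exact sqrt_le_exp (t * x)
      rw [Real.exp_neg, inv_eq_one_div, div_le_div_iff₀ (Real.exp_pos _) (by positivity)]
      linarith
    rw [hrw]
    have hx2 : Real.sqrt x * Real.sqrt x = x := Real.mul_self_sqrt hx.le
    calc x * (Real.exp (-(t * x)) / t)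
        ≤ x * ((1 / (Real.sqrt t * Real.sqrt x)) / t) := by
          apply mul_le_mul_of_nonneg_left _ hx.le
          exact div_le_div_of_nonneg_right hbound ht0.le
      _ = Real.sqrt x * (1 / (t * Real.sqrt t)) := by
          field_simp
          linear_combination (-1) * hx2
  rw [integral_const_mul, integral_const_mul, hint] at key
  rw [expInt]
  linarith

end aux

/-- The map `x ↦ x e^x E₁(x)` on `(0,∞)` takes values in `(0,1)`, tends to `0`
as `x → 0⁺`, and tends to `1` as `x → ∞`. -/
theorem stmt13 :
    (∀ x : ℝ, 0 < x → 0 < x * Real.exp x * expInt x ∧ x * Real.exp x * expInt x < 1)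
      ∧ Filter.Tendsto (fun x : ℝ => x * Real.exp x * expInt x)
          (nhdsWithin 0 (Set.Ioi 0)) (nhds 0)
      ∧ Filter.Tendsto (fun x : ℝ => x * Real.exp x * expInt x)
          Filter.atTop (nhds 1) := by
  have hlt : ∀ x : ℝ, 0 < x → x * Real.exp x * expInt x < 1 := by
    intro x hx
    have h := expInt_lt x hx
    have hex : Real.exp x * (Real.exp (-x) / x) = 1 / x := by
      rw [← mul_div_assoc, ← Real.exp_add]; simp
    calc x * Real.exp x * expInt x < x * Real.exp x * (Real.exp (-x) / x) := by
          apply mul_lt_mul_of_pos_left h (by positivity)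
      _ = 1 := by
          rw [mul_assoc, hex]
          field_simp
  have hpos : ∀ x : ℝ, 0 < x → 0 < x * Real.exp x * expInt x := by
    intro x hx
    exact mul_pos (mul_pos hx (Real.exp_pos x)) (expInt_pos x hx)
  refine ⟨fun x hx => ⟨hpos x hx, hlt x hx⟩, ?_, ?_⟩
  · -- tendsto 0 at 0⁺
    have hupper : Filter.Tendsto (fun x : ℝ => Real.exp x * (Real.sqrt x * 2))
        (nhdsWithin 0 (Set.Ioi 0)) (nhds 0) := by
      have hc : Filter.Tendsto (fun x : ℝ => Real.exp x * (Real.sqrt x * 2))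
          (nhds 0) (nhds 0) := by
        have : Continuous (fun x : ℝ => Real.exp x * (Real.sqrt x * 2)) :=
          Real.continuous_exp.mul (Real.continuous_sqrt.mul continuous_const)
        have := this.tendsto 0
        simpa using this
      exact hc.mono_left nhdsWithin_le_nhds
    refine tendsto_of_tendsto_of_tendsto_of_le_of_le' tendsto_const_nhds hupper ?_ ?_
    · filter_upwards [self_mem_nhdsWithin] with x hx
      exact (hpos x hx).le
    · filter_upwards [self_mem_nhdsWithin] with x hx
      have := mul_expInt_le x hx
      calc x * Real.exp x * expInt x = Real.exp x * (x * expInt x) := by ring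
        _ ≤ Real.exp x * (Real.sqrt x * 2) :=
            mul_le_mul_of_nonneg_left this (Real.exp_pos x).le
  · -- tendsto 1 at ⊤
    have hlower : Filter.Tendsto (fun x : ℝ => 1 - 1 / x) Filter.atTop (nhds 1) := by
      have h2 : Filter.Tendsto (fun x : ℝ => 1 / x) Filter.atTop (nhds 0) := by
        simpa [one_div] using (tendsto_inv_atTop_zero : Filter.Tendsto (fun x : ℝ => x⁻¹) Filter.atTop (nhds 0))
      simpa using (tendsto_const_nhds (x := (1:ℝ))).sub h2
    refine tendsto_of_tendsto_of_tendsto_of_le_of_le' hlower tendsto_const_nhds ?_ ?_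
    · filter_upwards [Filter.eventually_gt_atTop 0] with x hx
      have h := expInt_ge x hx
      have hee : Real.exp x * Real.exp (-x) = 1 := by rw [← Real.exp_add]; simp
      have heq : x * Real.exp x * (Real.exp (-x) / x - Real.exp (-x) / x ^ 2) = 1 - 1 / x := by
        field_simp
        linear_combination (x - 1) * hee
      rw [← heq]
      exact mul_le_mul_of_nonneg_left h (by positivity)
    · filter_upwards [Filter.eventually_gt_atTop 0] with x hx
      exact (hlt x hx).le
end
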